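/- A group E is isomorphic to a crossed product of the infinite cyclic group by a finite cyclic group of order n (equivalently, E has a normal subgroup N isomorphic to ℤ such that E/N is isomorphic to ZMod n) if and only if: when n is odd, E is isomorphic to the presented group on generators g, h with relators g·h·g^(−1)·h^(−1) and h^n·g^(−t) for some integer t; when n is even, E is isomorphic either to such a presented group ⟨g, h ∣ g·h·g^(−1)·h^(−1), h^n·g^(−t)⟩ for some integer t, or to the presented group ⟨g, h ∣ h^n, g·h·g·h^(−1)⟩. -/

import Mathlib

section Helpers
variable {G : Type*} [Group G]

/-- conjugation by powers of `h` when `h g h⁻¹ = g⁻¹`. -/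
lemma crossed_aux_conj {g h : G} (H : h * g * h⁻¹ = g⁻¹) (j : ℤ) :
    h ^ j * g * (h ^ j)⁻¹ = g ^ (j.negOnePow : ℤ) := by
  have H' : h⁻¹ * g * h = g⁻¹ := by
    have := congrArg (fun x => h⁻¹ * x⁻¹ * h) H
    simp only [mul_inv_rev, inv_inv] at this
    group at this ⊢
    rw [← this]
  induction j using Int.induction_on with
  | zero => simp
  | succ i ih =>
      have hh : h ^ ((i : ℤ) + 1) = h * h ^ (i : ℤ) := by
        rw [add_comm, zpow_add, zpow_one]
      rw [hh, mul_inv_rev]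
      calc h * h ^ (i:ℤ) * g * ((h ^ (i:ℤ))⁻¹ * h⁻¹)
          = h * (h ^ (i:ℤ) * g * (h ^ (i:ℤ))⁻¹) * h⁻¹ := by group
        _ = h * g ^ (((i:ℤ).negOnePow : ℤ)) * h⁻¹ := by rw [ih]
        _ = (h * g * h⁻¹) ^ (((i:ℤ).negOnePow : ℤ)) := by rw [conj_zpow]
        _ = (g⁻¹) ^ (((i:ℤ).negOnePow : ℤ)) := by rw [H]
        _ = g ^ ((((i:ℤ) + 1).negOnePow : ℤ)) := by
            rw [inv_zpow, ← zpow_neg, Int.negOnePow_succ]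
            push_cast
            ring_nf
  | pred i ih =>
      have hh : h ^ (-(i : ℤ) - 1) = h⁻¹ * h ^ (-(i : ℤ)) := by
        rw [sub_eq_add_neg, add_comm, zpow_add, zpow_neg_one]
      rw [hh, mul_inv_rev]
      calc h⁻¹ * h ^ (-(i:ℤ)) * g * ((h ^ (-(i:ℤ)))⁻¹ * h⁻¹⁻¹)
          = h⁻¹ * (h ^ (-(i:ℤ)) * g * (h ^ (-(i:ℤ)))⁻¹) * h := by group
        _ = h⁻¹ * g ^ (((-(i:ℤ)).negOnePow : ℤ)) * h := by rw [ih]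
        _ = (h⁻¹ * g * h⁻¹⁻¹) ^ (((-(i:ℤ)).negOnePow : ℤ)) := by rw [conj_zpow]; group
        _ = (g⁻¹) ^ (((-(i:ℤ)).negOnePow : ℤ)) := by rw [inv_inv, H']
        _ = g ^ (((-(i:ℤ) - 1).negOnePow : ℤ)) := by
            rw [inv_zpow, ← zpow_neg, Int.negOnePow_sub]
            congr 1
            simp [Int.negOnePow_one]

lemma crossed_aux_conj' {g h : G} (H : h * g * h⁻¹ = g⁻¹) (j i : ℤ) :
    h ^ j * g ^ i * (h ^ j)⁻¹ = g ^ (i * (j.negOnePow : ℤ)) := by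
  rw [← conj_zpow, crossed_aux_conj H, ← zpow_mul, mul_comm]

end Helpers

section Helpers2
variable {G : Type*} [Group G]

lemma crossed_nf_comm {g h : G} (Hc : g * h = h * g)
    (Hgen : Subgroup.closure ({g, h} : Set G) = ⊤) (x : G) :
    ∃ i j : ℤ, x = g ^ i * h ^ j := by
  have hx : x ∈ Subgroup.closure ({g, h} : Set G) := by rw [Hgen]; trivial
  have hcom : ∀ i j : ℤ, h ^ j * g ^ i = g ^ i * h ^ j := fun i j =>
    (((commute_iff_eq g h).2 Hc).zpow_zpow i j).eq.symm
  induction hx using Subgroup.closure_induction with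
  | mem y hy =>
      rcases hy with rfl | rfl
      · exact ⟨1, 0, by simp⟩
      · exact ⟨0, 1, by simp⟩
  | one => exact ⟨0, 0, by simp⟩
  | mul y z _ _ hy hz =>
      obtain ⟨i, j, rfl⟩ := hy
      obtain ⟨k, l, rfl⟩ := hz
      refine ⟨i + k, j + l, ?_⟩
      calc g ^ i * h ^ j * (g ^ k * h ^ l)
          = g ^ i * (h ^ j * g ^ k) * h ^ l := by group
        _ = g ^ i * (g ^ k * h ^ j) * h ^ l := by rw [hcom]
        _ = g ^ (i + k) * h ^ (j + l) := by group
  | inv y _ hy =>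
      obtain ⟨i, j, rfl⟩ := hy
      refine ⟨-i, -j, ?_⟩
      calc (g ^ i * h ^ j)⁻¹ = (h ^ j)⁻¹ * (g ^ i)⁻¹ := by group
        _ = h ^ (-j) * g ^ (-i) := by group
        _ = g ^ (-i) * h ^ (-j) := hcom _ _

lemma crossed_nf_twist {g h : G} (H : h * g * h⁻¹ = g⁻¹)
    (Hgen : Subgroup.closure ({g, h} : Set G) = ⊤) (x : G) :
    ∃ i j : ℤ, x = g ^ i * h ^ j := by
  have hx : x ∈ Subgroup.closure ({g, h} : Set G) := by rw [Hgen]; trivial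
  have key : ∀ j i : ℤ, h ^ j * g ^ i = g ^ (i * (j.negOnePow : ℤ)) * h ^ j := by
    intro j i
    have := crossed_aux_conj' H j i
    calc h ^ j * g ^ i = (h ^ j * g ^ i * (h ^ j)⁻¹) * h ^ j := by group
      _ = g ^ (i * (j.negOnePow : ℤ)) * h ^ j := by rw [this]
  induction hx using Subgroup.closure_induction with
  | mem y hy =>
      rcases hy with rfl | rfl
      · exact ⟨1, 0, by simp⟩
      · exact ⟨0, 1, by simp⟩
  | one => exact ⟨0, 0, by simp⟩
  | mul y z _ _ hy hz =>
      obtain ⟨i, j, rfl⟩ := hy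
      obtain ⟨k, l, rfl⟩ := hz
      refine ⟨i + k * (j.negOnePow : ℤ), j + l, ?_⟩
      calc g ^ i * h ^ j * (g ^ k * h ^ l)
          = g ^ i * (h ^ j * g ^ k) * h ^ l := by group
        _ = g ^ i * (g ^ (k * (j.negOnePow : ℤ)) * h ^ j) * h ^ l := by rw [key]
        _ = g ^ i * g ^ (k * (j.negOnePow : ℤ)) * (h ^ j * h ^ l) := by group
        _ = g ^ (i + k * (j.negOnePow : ℤ)) * h ^ (j + l) := by
            rw [← zpow_add, ← zpow_add]
  | inv y _ hy =>
      obtain ⟨i, j, rfl⟩ := hy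
      refine ⟨-i * ((-j).negOnePow : ℤ), -j, ?_⟩
      calc (g ^ i * h ^ j)⁻¹ = h ^ (-j) * g ^ (-i) := by group
        _ = g ^ (-i * ((-j).negOnePow : ℤ)) * h ^ (-j) := key _ _

/-- subgroup generated by an element of infinite order is `Multiplicative ℤ`. -/
noncomputable def crossedZPowersEquiv {g : G} (hg : ¬ IsOfFinOrder g) :
    (Subgroup.zpowers g) ≃* Multiplicative ℤ := by
  have hinj : Function.Injective (zpowersHom G g) := by
    have := injective_zpow_iff_not_isOfFinOrder.2 hg
    intro x y hxy
    exact this hxy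
  have hrange : (zpowersHom G g).range = Subgroup.zpowers g := by
    ext x
    simp [MonoidHom.mem_range, Subgroup.mem_zpowers_iff, zpowersHom_apply]
  exact ((MonoidHom.ofInjective hinj).trans
    (MulEquiv.subgroupCongr hrange)).symm

end Helpers2

section PG
variable {α : Type*}

lemma crossed_mk_rel_one {rels : Set (FreeGroup α)} {r : FreeGroup α} (hr : r ∈ rels) :
    PresentedGroup.mk rels r = 1 := by
  have : r ∈ Subgroup.normalClosure rels := Subgroup.subset_normalClosure hr
  exact (QuotientGroup.eq_one_iff r).2 this

lemma crossed_pg_gen (rels : Set (FreeGroup (Fin 2))) :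
    Subgroup.closure ({PresentedGroup.of 0, PresentedGroup.of 1} :
      Set (PresentedGroup rels)) = ⊤ := by
  have h : (Set.range (PresentedGroup.of : Fin 2 → PresentedGroup rels)) =
      {PresentedGroup.of 0, PresentedGroup.of 1} := by
    ext x
    simp [Fin.exists_fin_two, eq_comm]
  rw [← h, PresentedGroup.closure_range_of]

end PG

section GComm
variable (n : ℕ) (t : ℤ)

abbrev relsC : Set (FreeGroup (Fin 2)) :=
  {FreeGroup.of 0 * FreeGroup.of 1 * (FreeGroup.of 0)⁻¹ * (FreeGroup.of 1)⁻¹,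
   FreeGroup.of 1 ^ n * FreeGroup.of 0 ^ (-t)}

local notation "GC" => PresentedGroup (relsC n t)

lemma gc_comm : (PresentedGroup.of 0 : GC) * PresentedGroup.of 1 =
    PresentedGroup.of 1 * PresentedGroup.of 0 := by
  have h := crossed_mk_rel_one (rels := relsC n t)
    (r := FreeGroup.of 0 * FreeGroup.of 1 * (FreeGroup.of 0)⁻¹ * (FreeGroup.of 1)⁻¹)
    (Set.mem_insert _ _)
  simp only [map_mul, map_inv] at h
  have := mul_eq_one_iff_eq_inv.1 h
  -- this : mk(g0) * mk(g1) * (mk g0)⁻¹ = (mk g1⁻¹)⁻¹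
  rw [mul_inv_eq_iff_eq_mul] at this
  simpa [PresentedGroup.of] using this

lemma gc_pow : (PresentedGroup.of 1 : GC) ^ (n : ℕ) = (PresentedGroup.of 0 : GC) ^ t := by
  have h := crossed_mk_rel_one (rels := relsC n t)
    (r := FreeGroup.of 1 ^ n * FreeGroup.of 0 ^ (-t))
    (Set.mem_insert_of_mem _ rfl)
  simp only [map_mul, map_pow, map_zpow] at h
  have := mul_eq_one_iff_eq_inv.1 h
  rw [← zpow_neg] at this
  simpa [PresentedGroup.of] using this

end GComm

section GComm2
variable (n : ℕ) (t : ℤ)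

local notation "GC" => PresentedGroup (relsC n t)

lemma gc_nf (x : GC) : ∃ i j : ℤ,
    x = (PresentedGroup.of 0 : GC) ^ i * (PresentedGroup.of 1 : GC) ^ j :=
  crossed_nf_comm (gc_comm n t) (crossed_pg_gen _) x

/-- the homomorphism to `ZMod n` counting the exponent of `h`. -/
noncomputable def gcChi : GC →* Multiplicative (ZMod n) :=
  PresentedGroup.toGroup (f := ![1, Multiplicative.ofAdd (1 : ZMod n)]) (by
    intro r hr
    simp only [relsC, Set.mem_insert_iff, Set.mem_singleton_iff] at hr
    rcases hr with rfl | rfl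
    · simp
    · simp only [map_mul, map_pow, map_zpow, FreeGroup.lift_apply_of]
      simp only [Matrix.cons_val_one, Matrix.head_cons, Matrix.cons_val_zero]
      rw [one_zpow, mul_one]
      rw [← ofAdd_nsmul]
      simp [ZMod.natCast_self])

@[simp] lemma gcChi_of0 : gcChi n t (PresentedGroup.of 0) = 1 :=
  PresentedGroup.toGroup.of _

@[simp] lemma gcChi_of1 : gcChi n t (PresentedGroup.of 1) = Multiplicative.ofAdd (1 : ZMod n) :=
  PresentedGroup.toGroup.of _

/-- a homomorphism to `Multiplicative ℤ` detecting infinite order of `of 0`. -/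
noncomputable def gcW : GC →* Multiplicative ℤ :=
  PresentedGroup.toGroup (f := ![Multiplicative.ofAdd (n : ℤ), Multiplicative.ofAdd t]) (by
    intro r hr
    simp only [relsC, Set.mem_insert_iff, Set.mem_singleton_iff] at hr
    rcases hr with rfl | rfl
    · simp only [map_mul, map_inv, FreeGroup.lift_apply_of]
      simp only [Matrix.cons_val_one, Matrix.head_cons, Matrix.cons_val_zero]
      rw [← ofAdd_neg, ← ofAdd_neg, ← ofAdd_add, ← ofAdd_add, ← ofAdd_add]
      rw [show (n : ℤ) + t + -(n:ℤ) + -t = 0 by ring]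
      rfl
    · simp only [map_mul, map_pow, map_zpow, FreeGroup.lift_apply_of]
      simp only [Matrix.cons_val_one, Matrix.head_cons, Matrix.cons_val_zero]
      rw [← ofAdd_nsmul, ← ofAdd_zsmul, ← ofAdd_add]
      simp only [nsmul_eq_mul, smul_eq_mul]
      rw [show (n : ℤ) * t + -t * n = 0 by ring]
      rfl)

lemma gc_inf_order (hn : 1 ≤ n) : ¬ IsOfFinOrder (PresentedGroup.of 0 : GC) := by
  intro hfin
  have h2 : IsOfFinOrder (gcW n t (PresentedGroup.of 0)) := (gcW n t).isOfFinOrder hfin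
  have h3 : gcW n t (PresentedGroup.of 0) = Multiplicative.ofAdd (n : ℤ) :=
    PresentedGroup.toGroup.of _
  rw [h3] at h2
  obtain ⟨k, hk, hk1⟩ := isOfFinOrder_iff_pow_eq_one.1 h2
  rw [← ofAdd_nsmul] at hk1
  have h4 := congrArg Multiplicative.toAdd hk1
  simp only [toAdd_ofAdd, toAdd_one, nsmul_eq_mul, mul_eq_zero] at h4
  rcases h4 with h | h <;> omega

end GComm2

section GComm3
variable (n : ℕ) (t : ℤ)

local notation "GC" => PresentedGroup (relsC n t)

lemma gc_chi_apply (i j : ℤ) :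
    gcChi n t ((PresentedGroup.of 0 : GC) ^ i * (PresentedGroup.of 1 : GC) ^ j) =
      Multiplicative.ofAdd (j : ZMod n) := by
  rw [map_mul, map_zpow, map_zpow, gcChi_of0, gcChi_of1, one_zpow, one_mul,
    ← ofAdd_zsmul, zsmul_eq_mul, mul_one]

lemma gc_ker : (gcChi n t).ker = Subgroup.zpowers (PresentedGroup.of 0 : GC) := by
  ext x
  obtain ⟨i, j, rfl⟩ := gc_nf n t x
  constructor
  · intro hx
    rw [MonoidHom.mem_ker, gc_chi_apply] at hx
    have hj : (n : ℤ) ∣ j := by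
      have : ((j : ℤ) : ZMod n) = 0 := by
        have := congrArg Multiplicative.toAdd hx
        simpa using this
      exact (ZMod.intCast_zmod_eq_zero_iff_dvd j n).1 this
    obtain ⟨m, rfl⟩ := hj
    have : (PresentedGroup.of 1 : GC) ^ ((n : ℤ) * m) = (PresentedGroup.of 0 : GC) ^ (t * m) := by
      rw [zpow_mul, zpow_natCast, gc_pow, ← zpow_mul]
    rw [this, ← zpow_add]
    exact Subgroup.zpow_mem _ (Subgroup.mem_zpowers _) _
  · intro hx
    obtain ⟨k, hk⟩ := Subgroup.mem_zpowers_iff.1 hx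
    rw [MonoidHom.mem_ker, ← hk, map_zpow, gcChi_of0, one_zpow]

lemma gc_mul_comm (x y : GC) : x * y = y * x := by
  obtain ⟨i, j, rfl⟩ := gc_nf n t x
  obtain ⟨k, l, rfl⟩ := gc_nf n t y
  have hc : ∀ a b : ℤ, (PresentedGroup.of 1 : GC) ^ b * (PresentedGroup.of 0 : GC) ^ a =
      (PresentedGroup.of 0 : GC) ^ a * (PresentedGroup.of 1 : GC) ^ b := fun a b =>
    (((commute_iff_eq _ _).2 (gc_comm n t)).zpow_zpow a b).eq.symm
  calc (PresentedGroup.of 0 : GC) ^ i * PresentedGroup.of 1 ^ j *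
        (PresentedGroup.of 0 ^ k * PresentedGroup.of 1 ^ l)
      = PresentedGroup.of 0 ^ i * (PresentedGroup.of 1 ^ j * PresentedGroup.of 0 ^ k) *
        PresentedGroup.of 1 ^ l := by group
    _ = PresentedGroup.of 0 ^ i * (PresentedGroup.of 0 ^ k * PresentedGroup.of 1 ^ j) *
        PresentedGroup.of 1 ^ l := by rw [hc]
    _ = PresentedGroup.of 0 ^ (i + k) * PresentedGroup.of 1 ^ (j + l) := by
        rw [zpow_add, zpow_add]
        group
    _ = PresentedGroup.of 0 ^ (k + i) * PresentedGroup.of 1 ^ (l + j) := by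
        rw [add_comm, add_comm l j]
    _ = PresentedGroup.of 0 ^ k * PresentedGroup.of 1 ^ l *
        (PresentedGroup.of 0 ^ i * PresentedGroup.of 1 ^ j) := by
        rw [zpow_add, zpow_add]
        calc PresentedGroup.of 0 ^ k * PresentedGroup.of 0 ^ i *
              ((PresentedGroup.of 1:GC) ^ l * PresentedGroup.of 1 ^ j)
            = PresentedGroup.of 0 ^ k * (PresentedGroup.of 0 ^ i * PresentedGroup.of 1 ^ l) *
              PresentedGroup.of 1 ^ j := by group
          _ = PresentedGroup.of 0 ^ k * (PresentedGroup.of 1 ^ l * PresentedGroup.of 0 ^ i) *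
              PresentedGroup.of 1 ^ j := by rw [← hc]
          _ = _ := by group

lemma gc_chi_surj : Function.Surjective (gcChi n t) := by
  intro z
  obtain ⟨k, hk⟩ := ZMod.intCast_surjective (Multiplicative.toAdd z)
  refine ⟨(PresentedGroup.of 0 : GC) ^ (0:ℤ) * (PresentedGroup.of 1 : GC) ^ k, ?_⟩
  rw [gc_chi_apply, hk]
  rfl

lemma crossedC (hn : 1 ≤ n) : ∃ N : Subgroup GC, ∃ _ : N.Normal,
    Nonempty (N ≃* Multiplicative ℤ) ∧ Nonempty ((GC ⧸ N) ≃* Multiplicative (ZMod n)) := by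
  have hnormal : (Subgroup.zpowers (PresentedGroup.of 0 : GC)).Normal := by
    constructor
    intro m hm x
    rw [gc_mul_comm n t x m, mul_assoc, mul_inv_cancel, mul_one]
    exact hm
  haveI := hnormal
  refine ⟨_, hnormal, ⟨crossedZPowersEquiv (gc_inf_order n t hn)⟩, ?_⟩
  exact ⟨(QuotientGroup.quotientMulEquivOfEq (gc_ker n t).symm).trans
    (QuotientGroup.quotientKerEquivOfSurjective _ (gc_chi_surj n t))⟩

end GComm3

section GDih
variable (n : ℕ)

abbrev relsD : Set (FreeGroup (Fin 2)) :=
  {FreeGroup.of 1 ^ n, FreeGroup.of 0 * FreeGroup.of 1 * FreeGroup.of 0 * (FreeGroup.of 1)⁻¹}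

local notation "GD" => PresentedGroup (relsD n)

lemma gd_hn : (PresentedGroup.of 1 : GD) ^ (n : ℕ) = 1 := by
  have h := crossed_mk_rel_one (rels := relsD n) (r := FreeGroup.of 1 ^ n)
    (Set.mem_insert _ _)
  simpa [map_pow, PresentedGroup.of] using h

lemma gd_twist : (PresentedGroup.of 1 : GD) * PresentedGroup.of 0 * (PresentedGroup.of 1)⁻¹ =
    (PresentedGroup.of 0 : GD)⁻¹ := by
  have h := crossed_mk_rel_one (rels := relsD n)
    (r := FreeGroup.of 0 * FreeGroup.of 1 * FreeGroup.of 0 * (FreeGroup.of 1)⁻¹)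
    (Set.mem_insert_of_mem _ rfl)
  simp only [map_mul, map_inv] at h
  rw [mul_inv_eq_one] at h
  -- h : mk(g0) * mk(g1) * mk(g0) = mk(g1)
  have h' : (PresentedGroup.of 0 : GD) * PresentedGroup.of 1 * PresentedGroup.of 0 =
      PresentedGroup.of 1 := h
  have h2 : (PresentedGroup.of 1 : GD) * PresentedGroup.of 0 =
      (PresentedGroup.of 0 : GD)⁻¹ * PresentedGroup.of 1 := by
    conv_rhs => rw [← h']
    group
  rw [h2]
  group

lemma gd_nf (x : GD) : ∃ i j : ℤ,
    x = (PresentedGroup.of 0 : GD) ^ i * (PresentedGroup.of 1 : GD) ^ j :=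
  crossed_nf_twist (gd_twist n) (crossed_pg_gen _) x

/-- map to the infinite dihedral group. -/
noncomputable def gdW (he : Even n) : GD →* DihedralGroup 0 :=
  PresentedGroup.toGroup (f := ![DihedralGroup.r 1, DihedralGroup.sr 0]) (by
    intro r hr
    simp only [relsD, Set.mem_insert_iff, Set.mem_singleton_iff] at hr
    rcases hr with rfl | rfl
    · simp only [map_pow, FreeGroup.lift_apply_of, Matrix.cons_val_one, Matrix.head_cons, Matrix.cons_val_zero]
      obtain ⟨m, rfl⟩ := he
      rw [← two_mul, pow_mul]
      have : (DihedralGroup.sr 0 : DihedralGroup 0) ^ 2 = 1 := by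
        rw [sq, DihedralGroup.sr_mul_sr, sub_zero, DihedralGroup.one_def]
      rw [this, one_pow]
    · simp only [map_mul, map_inv, FreeGroup.lift_apply_of,
        Matrix.cons_val_one, Matrix.head_cons, Matrix.cons_val_zero]
      rw [DihedralGroup.r_mul_sr, DihedralGroup.sr_mul_r]
      rw [show (0 : ZMod 0) - 1 + 1 = 0 by ring]
      exact mul_inv_cancel _)

lemma gd_inf_order (he : Even n) : ¬ IsOfFinOrder (PresentedGroup.of 0 : GD) := by
  intro hfin
  have h2 : IsOfFinOrder ((gdW n he) (PresentedGroup.of 0)) := (gdW n he).isOfFinOrder hfin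
  have h3 : gdW n he (PresentedGroup.of 0) = DihedralGroup.r 1 := PresentedGroup.toGroup.of _
  rw [h3] at h2
  exact (orderOf_eq_zero_iff.1 DihedralGroup.orderOf_r_one) h2

noncomputable def gdChi : GD →* Multiplicative (ZMod n) :=
  PresentedGroup.toGroup (f := ![1, Multiplicative.ofAdd (1 : ZMod n)]) (by
    intro r hr
    simp only [relsD, Set.mem_insert_iff, Set.mem_singleton_iff] at hr
    rcases hr with rfl | rfl
    · simp only [map_pow, FreeGroup.lift_apply_of, Matrix.cons_val_one, Matrix.head_cons, Matrix.cons_val_zero]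
      rw [← ofAdd_nsmul]
      simp [ZMod.natCast_self]
    · simp)

@[simp] lemma gdChi_of0 : gdChi n (PresentedGroup.of 0) = 1 := PresentedGroup.toGroup.of _

@[simp] lemma gdChi_of1 : gdChi n (PresentedGroup.of 1) = Multiplicative.ofAdd (1 : ZMod n) :=
  PresentedGroup.toGroup.of _

lemma gd_chi_apply (i j : ℤ) :
    gdChi n ((PresentedGroup.of 0 : GD) ^ i * (PresentedGroup.of 1 : GD) ^ j) =
      Multiplicative.ofAdd (j : ZMod n) := by
  rw [map_mul, map_zpow, map_zpow, gdChi_of0, gdChi_of1, one_zpow, one_mul,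
    ← ofAdd_zsmul, zsmul_eq_mul, mul_one]

lemma gd_ker : (gdChi n).ker = Subgroup.zpowers (PresentedGroup.of 0 : GD) := by
  ext x
  obtain ⟨i, j, rfl⟩ := gd_nf n x
  constructor
  · intro hx
    rw [MonoidHom.mem_ker, gd_chi_apply] at hx
    have hj : (n : ℤ) ∣ j := by
      have : ((j : ℤ) : ZMod n) = 0 := by
        have := congrArg Multiplicative.toAdd hx
        simpa using this
      exact (ZMod.intCast_zmod_eq_zero_iff_dvd j n).1 this
    obtain ⟨m, rfl⟩ := hj
    have : (PresentedGroup.of 1 : GD) ^ ((n : ℤ) * m) = 1 := by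
      rw [zpow_mul, zpow_natCast, gd_hn, one_zpow]
    rw [this, mul_one]
    exact Subgroup.mem_zpowers_iff.2 ⟨i, rfl⟩
  · intro hx
    obtain ⟨k, hk⟩ := Subgroup.mem_zpowers_iff.1 hx
    rw [MonoidHom.mem_ker, ← hk, map_zpow, gdChi_of0, one_zpow]

lemma gd_chi_surj : Function.Surjective (gdChi n) := by
  intro z
  obtain ⟨k, hk⟩ := ZMod.intCast_surjective (Multiplicative.toAdd z)
  refine ⟨(PresentedGroup.of 0 : GD) ^ (0:ℤ) * (PresentedGroup.of 1 : GD) ^ k, ?_⟩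
  rw [gd_chi_apply, hk]
  rfl

lemma gd_normal : (Subgroup.zpowers (PresentedGroup.of 0 : GD)).Normal := by
  constructor
  intro m hm x
  obtain ⟨k, hk⟩ := Subgroup.mem_zpowers_iff.1 hm
  obtain ⟨i, j, rfl⟩ := gd_nf n x
  rw [← hk]
  have key := crossed_aux_conj' (gd_twist n) j k
  have : (PresentedGroup.of 0 : GD) ^ i * PresentedGroup.of 1 ^ j * PresentedGroup.of 0 ^ k *
      (PresentedGroup.of 0 ^ i * PresentedGroup.of 1 ^ j)⁻¹ =
      PresentedGroup.of 0 ^ i * (PresentedGroup.of 1 ^ j * PresentedGroup.of 0 ^ k *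
        (PresentedGroup.of 1 ^ j)⁻¹) * (PresentedGroup.of 0 ^ i)⁻¹ := by group
  rw [this, key]
  refine Subgroup.mem_zpowers_iff.2 ⟨k * ((j).negOnePow : ℤ), ?_⟩
  group

lemma crossedD (hn : 1 ≤ n) (he : Even n) : ∃ N : Subgroup GD, ∃ _ : N.Normal,
    Nonempty (N ≃* Multiplicative ℤ) ∧ Nonempty ((GD ⧸ N) ≃* Multiplicative (ZMod n)) := by
  have hnormal := gd_normal n
  haveI := hnormal
  refine ⟨_, hnormal, ⟨crossedZPowersEquiv (gd_inf_order n he)⟩, ?_⟩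
  exact ⟨(QuotientGroup.quotientMulEquivOfEq (gd_ker n).symm).trans
    (QuotientGroup.quotientKerEquivOfSurjective _ (gd_chi_surj n))⟩

end GDih

lemma crossed_transfer {E G : Type*} [Group E] [Group G] (e : E ≃* G) (n : ℕ)
    (h : ∃ N : Subgroup G, ∃ _ : N.Normal, Nonempty (N ≃* Multiplicative ℤ) ∧
      Nonempty ((G ⧸ N) ≃* Multiplicative (ZMod n))) :
    ∃ N : Subgroup E, ∃ _ : N.Normal, Nonempty (N ≃* Multiplicative ℤ) ∧
      Nonempty ((E ⧸ N) ≃* Multiplicative (ZMod n)) := by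
  obtain ⟨N, hN, ⟨φ⟩, ⟨ψ⟩⟩ := h
  haveI := hN
  have hM : (N.map e.symm.toMonoidHom).Normal := hN.map e.symm.toMonoidHom e.symm.surjective
  haveI := hM
  have hmap : (N.map e.symm.toMonoidHom).map e.toMonoidHom = N := by
    rw [Subgroup.map_map]
    have h1 : (e.toMonoidHom.comp e.symm.toMonoidHom) = MonoidHom.id G := by
      ext x; simp
    rw [h1, Subgroup.map_id]
  exact ⟨N.map e.symm.toMonoidHom, hM, ⟨(e.symm.subgroupMap N).symm.trans φ⟩,
    ⟨(QuotientGroup.congr _ N e hmap).trans ψ⟩⟩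

lemma crossed_forward (n : ℕ) (hn : 1 ≤ n) {E : Type*} [Group E]
    (N : Subgroup E) [hN : N.Normal] (φ : N ≃* Multiplicative ℤ)
    (ψ : (E ⧸ N) ≃* Multiplicative (ZMod n)) :
    ((Odd n → ∃ t : ℤ, Nonempty (E ≃* PresentedGroup (relsC n t))) ∧
      (Even n → ((∃ t : ℤ, Nonempty (E ≃* PresentedGroup (relsC n t))) ∨
        Nonempty (E ≃* PresentedGroup (relsD n))))) := by
  classical
  set a₀ : N := φ.symm (Multiplicative.ofAdd 1) with ha₀
  set a : E := (a₀ : E) with ha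
  have hφa : ∀ k : ℤ, φ (a₀ ^ k) = Multiplicative.ofAdd k := by
    intro k
    rw [map_zpow, ha₀, MulEquiv.apply_symm_apply, ← ofAdd_zsmul, smul_eq_mul, mul_one]
  have hcoe : ∀ k : ℤ, a ^ k = ((a₀ ^ k : N) : E) := by
    intro k; rw [ha]; norm_cast
  have akey : ∀ k : ℤ, a ^ k = 1 → k = 0 := by
    intro k hk
    have h1 : (a₀ ^ k : N) = 1 := by
      apply Subtype.ext
      rw [hcoe k] at hk
      simpa using hk
    have h2 := congrArg φ h1
    rw [hφa, map_one] at h2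
    simpa using congrArg Multiplicative.toAdd h2
  have hmemN : ∀ x : E, x ∈ N → ∃ k : ℤ, x = a ^ k := by
    intro x hx
    refine ⟨Multiplicative.toAdd (φ ⟨x, hx⟩), ?_⟩
    have h1 : a₀ ^ (Multiplicative.toAdd (φ ⟨x, hx⟩)) = ⟨x, hx⟩ := by
      apply φ.injective
      rw [hφa]
      simp
    rw [hcoe, h1]
  have haN : a ∈ N := SetLike.coe_mem a₀
  set π : E →* E ⧸ N := QuotientGroup.mk' N with hπ
  have hmemN' : ∀ x : E, π x = 1 → ∃ k : ℤ, x = a ^ k := by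
    intro x hx
    rw [hπ, QuotientGroup.mk'_apply, QuotientGroup.eq_one_iff] at hx
    exact hmemN x hx
  have hπa : π a = 1 := by
    rw [hπ, QuotientGroup.mk'_apply, QuotientGroup.eq_one_iff]
    exact haN
  obtain ⟨b, hb⟩ : ∃ b : E, π b = ψ.symm (Multiplicative.ofAdd (1 : ZMod n)) :=
    QuotientGroup.mk'_surjective N _
  have hψb : ψ (π b) = Multiplicative.ofAdd (1 : ZMod n) := by rw [hb]; simp
  have hψbz : ∀ j : ℤ, ψ ((π b) ^ j) = Multiplicative.ofAdd ((j : ZMod n)) := by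
    intro j
    rw [map_zpow, hψb, ← ofAdd_zsmul, zsmul_eq_mul, mul_one]
  have hbnN : ∃ t : ℤ, b ^ ((n:ℕ) : ℤ) = a ^ t := by
    apply hmemN'
    apply ψ.injective
    rw [map_zpow, hψbz, map_one]
    have h0 : (((n:ℕ) : ℤ) : ZMod n) = 0 := by
      push_cast
      exact ZMod.natCast_self n
    rw [h0]
    rfl
  obtain ⟨t, ht⟩ := hbnN
  obtain ⟨s, hs⟩ : ∃ s : ℤ, b * a * b⁻¹ = a ^ s :=
    hmemN _ (hN.conj_mem a haN b)
  obtain ⟨s', hs'⟩ : ∃ s' : ℤ, b⁻¹ * a * b = a ^ s' := by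
    have := hN.conj_mem a haN b⁻¹
    rw [inv_inv] at this
    exact hmemN _ this
  have hss' : s' * s = 1 := by
    have h1 : a = (b⁻¹ * (a ^ s) * b) := by
      rw [← hs]; group
    have h2 : b⁻¹ * (a ^ s) * b = (b⁻¹ * a * b) ^ s := by
      have h := conj_zpow (i := s) (a := b⁻¹) (b := a)
      rw [inv_inv] at h
      exact h.symm
    have h3 : a ^ (s' * s) = a := by
      calc a ^ (s' * s) = (a ^ s') ^ s := by rw [zpow_mul]
        _ = (b⁻¹ * a * b) ^ s := by rw [hs']
        _ = b⁻¹ * (a ^ s) * b := h2.symm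
        _ = a := h1.symm
    have h4 : a ^ (s' * s - 1) = 1 := by
      rw [zpow_sub, h3, zpow_one, mul_inv_cancel]
    have := akey _ h4
    omega
  have hnfE : ∀ x : E, ∃ k j : ℤ, x = a ^ k * b ^ j := by
    intro x
    obtain ⟨j, hj⟩ := ZMod.intCast_surjective (Multiplicative.toAdd (ψ (π x)))
    have h1 : π (x * b ^ (-j)) = 1 := by
      apply ψ.injective
      rw [map_mul, map_mul, map_zpow, hψbz, map_one]
      have hx2 : ψ (π x) = Multiplicative.ofAdd ((j : ZMod n)) := by
        rw [hj]; simp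
      rw [hx2, ← ofAdd_add]
      push_cast
      simp
    obtain ⟨k, hk⟩ := hmemN' _ h1
    refine ⟨k, j, ?_⟩
    have hx3 : x = (x * b ^ (-j)) * b ^ j := by group
    rw [hx3, hk]
  have hsval : s = 1 ∨ s = -1 :=
    Int.isUnit_iff.1 (IsUnit.of_mul_eq_one (a := s) s' (by rw [mul_comm]; exact hss'))
  rcases hsval with rfl | rfl
  · -- commutative case
    rw [zpow_one] at hs
    have hcomm : a * b = b * a := by
      have hba : b * a = (b * a * b⁻¹) * b := by group
      rw [hba, hs]
    have hrels : ∀ r ∈ relsC n t, FreeGroup.lift ![a, b] r = 1 := by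
      intro r hr
      simp only [relsC, Set.mem_insert_iff, Set.mem_singleton_iff] at hr
      rcases hr with rfl | rfl
      · simp only [map_mul, map_inv, FreeGroup.lift_apply_of, Matrix.cons_val_zero,
          Matrix.cons_val_one, Matrix.head_cons]
        rw [hcomm]; group
      · simp only [map_mul, map_pow, map_zpow, FreeGroup.lift_apply_of, Matrix.cons_val_zero,
          Matrix.cons_val_one, Matrix.head_cons]
        rw [← zpow_natCast b n, ht, ← zpow_add]
        simp
    set f : PresentedGroup (relsC n t) →* E := PresentedGroup.toGroup hrels with hfdef
    have hf0 : f (PresentedGroup.of 0) = a := PresentedGroup.toGroup.of hrels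
    have hf1 : f (PresentedGroup.of 1) = b := PresentedGroup.toGroup.of hrels
    have hfsurj : Function.Surjective f := by
      intro x
      obtain ⟨k, j, rfl⟩ := hnfE x
      exact ⟨PresentedGroup.of 0 ^ k * PresentedGroup.of 1 ^ j, by
        rw [map_mul, map_zpow, map_zpow, hf0, hf1]⟩
    have hfinj : Function.Injective f := by
      rw [injective_iff_map_eq_one]
      intro x hx
      obtain ⟨i, j, rfl⟩ := gc_nf n t x
      rw [map_mul, map_zpow, map_zpow, hf0, hf1] at hx
      have hπcalc : π (a ^ i * b ^ j) = (π b) ^ j := by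
        rw [map_mul, map_zpow, map_zpow, hπa, one_zpow, one_mul]
      have h1 : Multiplicative.ofAdd ((j : ZMod n)) = 1 := by
        rw [← hψbz j, ← hπcalc, hx, map_one, map_one]
      have h2 : ((j : ℤ) : ZMod n) = 0 := by simpa using congrArg Multiplicative.toAdd h1
      obtain ⟨m, rfl⟩ := (ZMod.intCast_zmod_eq_zero_iff_dvd j n).1 h2
      have h3 : b ^ ((n:ℤ) * m) = a ^ (t * m) := by
        rw [zpow_mul, ht, ← zpow_mul]
      rw [h3, ← zpow_add] at hx
      have h4 := akey _ hx
      have h5 : (PresentedGroup.of 1 : PresentedGroup (relsC n t)) ^ ((n:ℤ) * m) =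
          PresentedGroup.of 0 ^ (t * m) := by
        rw [zpow_mul, zpow_natCast, gc_pow, ← zpow_mul]
      rw [h5, ← zpow_add, h4, zpow_zero]
    have iso : E ≃* PresentedGroup (relsC n t) := (MulEquiv.ofBijective f ⟨hfinj, hfsurj⟩).symm
    exact ⟨fun _ => ⟨t, ⟨iso⟩⟩, fun _ => Or.inl ⟨t, ⟨iso⟩⟩⟩
  · -- twisted case
    rw [zpow_neg_one] at hs
    have h2 : a ^ (-t) = a ^ t := by
      have hc : b⁻¹⁻¹ * (a ^ t) * b⁻¹ = b * a ^ t * b⁻¹ := by rw [inv_inv]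
      calc a ^ (-t) = (a⁻¹) ^ t := by rw [inv_zpow, zpow_neg]
        _ = (b * a * b⁻¹) ^ t := by rw [hs]
        _ = b * a ^ t * b⁻¹ := conj_zpow
        _ = b * b ^ ((n:ℕ):ℤ) * b⁻¹ := by rw [ht]
        _ = b ^ ((n:ℕ):ℤ) := by group
        _ = a ^ t := ht
    have htz : t = 0 := by
      have h3 : a ^ (-t - t) = 1 := by
        rw [zpow_sub, h2, mul_inv_cancel]
      have := akey _ h3
      omega
    subst htz
    rw [zpow_zero] at ht
    have hbn : b ^ (n:ℕ) = 1 := by rw [← zpow_natCast b n]; exact ht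
    have heven : Even n := by
      by_contra hodd
      have ho : Odd n := Nat.odd_iff.2 (by
        rcases Nat.even_or_odd n with he | ho
        · exact absurd he hodd
        · exact Nat.odd_iff.1 ho)
      have key := crossed_aux_conj hs ((n:ℕ) : ℤ)
      rw [zpow_natCast, hbn] at key
      have hne : (((n:ℕ):ℤ).negOnePow : ℤ) = -1 := by
        rw [Int.negOnePow_odd _ ((Int.odd_coe_nat n).2 ho)]
        simp
      rw [hne] at key
      simp only [one_mul, inv_one, mul_one] at key
      -- key : a = a ^ (-1 : ℤ)
      have haa : a * a = 1 := by
        nth_rewrite 1 [key]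
        group
      have h5 : a ^ (2:ℤ) = 1 := by
        rw [show (2:ℤ) = 1 + 1 by norm_num, zpow_add, zpow_one]
        exact haa
      have := akey _ h5
      omega
    have hrels : ∀ r ∈ relsD n, FreeGroup.lift ![a, b] r = 1 := by
      intro r hr
      simp only [relsD, Set.mem_insert_iff, Set.mem_singleton_iff] at hr
      rcases hr with rfl | rfl
      · simp only [map_pow, FreeGroup.lift_apply_of, Matrix.cons_val_one, Matrix.head_cons, Matrix.cons_val_zero]
        exact hbn
      · simp only [map_mul, map_inv, FreeGroup.lift_apply_of, Matrix.cons_val_zero,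
          Matrix.cons_val_one, Matrix.head_cons]
        have : a * b * a * b⁻¹ = a * (b * a * b⁻¹) := by group
        rw [this, hs, mul_inv_cancel]
    set f : PresentedGroup (relsD n) →* E := PresentedGroup.toGroup hrels with hfdef
    have hf0 : f (PresentedGroup.of 0) = a := PresentedGroup.toGroup.of hrels
    have hf1 : f (PresentedGroup.of 1) = b := PresentedGroup.toGroup.of hrels
    have hfsurj : Function.Surjective f := by
      intro x
      obtain ⟨k, j, rfl⟩ := hnfE x
      exact ⟨PresentedGroup.of 0 ^ k * PresentedGroup.of 1 ^ j, by
        rw [map_mul, map_zpow, map_zpow, hf0, hf1]⟩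
    have hfinj : Function.Injective f := by
      rw [injective_iff_map_eq_one]
      intro x hx
      obtain ⟨i, j, rfl⟩ := gd_nf n x
      rw [map_mul, map_zpow, map_zpow, hf0, hf1] at hx
      have hπcalc : π (a ^ i * b ^ j) = (π b) ^ j := by
        rw [map_mul, map_zpow, map_zpow, hπa, one_zpow, one_mul]
      have h1 : Multiplicative.ofAdd ((j : ZMod n)) = 1 := by
        rw [← hψbz j, ← hπcalc, hx, map_one, map_one]
      have h2 : ((j : ℤ) : ZMod n) = 0 := by simpa using congrArg Multiplicative.toAdd h1
      obtain ⟨m, rfl⟩ := (ZMod.intCast_zmod_eq_zero_iff_dvd j n).1 h2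
      have h3 : b ^ ((n:ℤ) * m) = 1 := by
        rw [zpow_mul, zpow_natCast, hbn, one_zpow]
      rw [h3, mul_one] at hx
      have h4 := akey _ hx
      have h5 : (PresentedGroup.of 1 : PresentedGroup (relsD n)) ^ ((n:ℤ) * m) = 1 := by
        rw [zpow_mul, zpow_natCast, gd_hn, one_zpow]
      rw [h5, mul_one, h4, zpow_zero]
    have iso : E ≃* PresentedGroup (relsD n) := (MulEquiv.ofBijective f ⟨hfinj, hfsurj⟩).symm
    exact ⟨fun hodd => absurd hodd (Nat.not_odd_iff_even.2 heven), fun _ => Or.inr ⟨iso⟩⟩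

/-- A group `E` is an extension of the infinite cyclic group by a cyclic group of order `n`
iff: when `n` is odd, `E ≅ ⟨g, h ∣ gh = hg, hⁿ = gᵗ⟩` for some integer `t`; when `n` is even,
`E ≅ ⟨g, h ∣ gh = hg, hⁿ = gᵗ⟩` for some integer `t`, or `E ≅ ⟨g, h ∣ hⁿ = 1, ghg = h⟩`. -/
theorem crossed_product_infinite_cyclic_by_finite_cyclic
    (n : ℕ) (hn : 1 ≤ n) (E : Type*) [Group E] :
    (∃ N : Subgroup E, ∃ hN : N.Normal,
        Nonempty (N ≃* Multiplicative ℤ) ∧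
        (haveI := hN; Nonempty (E ⧸ N ≃* Multiplicative (ZMod n)))) ↔
      ((Odd n → ∃ t : ℤ,
          Nonempty (E ≃* PresentedGroup
            ({FreeGroup.of 0 * FreeGroup.of 1 * (FreeGroup.of 0)⁻¹ * (FreeGroup.of 1)⁻¹,
              FreeGroup.of 1 ^ n * FreeGroup.of 0 ^ (-t)} : Set (FreeGroup (Fin 2))))) ∧
        (Even n →
          ((∃ t : ℤ,
            Nonempty (E ≃* PresentedGroup
              ({FreeGroup.of 0 * FreeGroup.of 1 * (FreeGroup.of 0)⁻¹ * (FreeGroup.of 1)⁻¹,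
                FreeGroup.of 1 ^ n * FreeGroup.of 0 ^ (-t)} : Set (FreeGroup (Fin 2))))) ∨
          Nonempty (E ≃* PresentedGroup
            ({FreeGroup.of 1 ^ n,
              FreeGroup.of 0 * FreeGroup.of 1 * FreeGroup.of 0 * (FreeGroup.of 1)⁻¹} :
              Set (FreeGroup (Fin 2))))))) := by
  constructor
  · rintro ⟨N, hN, ⟨φ⟩, hq⟩
    haveI := hN
    obtain ⟨ψ⟩ := hq
    exact crossed_forward n hn N φ ψ
  · intro h
    rcases Nat.even_or_odd n with he | ho
    · rcases h.2 he with ⟨t, ⟨iso⟩⟩ | hiso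
      · exact crossed_transfer iso n (crossedC n t hn)
      · obtain ⟨iso⟩ := hiso
        exact crossed_transfer iso n (crossedD n hn he)
    · obtain ⟨t, ⟨iso⟩⟩ := h.1 ho
      exact crossed_transfer iso n (crossedC n t hn)
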